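/- arXiv:1908.07128 — 3 statements merged into one kernel-verified Lean document; each statement's English description precedes it below -/
import Mathlib

section
/- The 6×6 real matrix S = [[1,1],[1,−1]] ⊗ S₃ (Kronecker product) is symmetric and satisfies S · Sᵀ = D² · I₆, where D² = 2(1 + d² + (d² − 1)²). -/
open Kronecker

/-- `d = 2 cos(π/7)`. -/
noncomputable def d : ℝ := 2 * Real.cos (Real.pi / 7)

/-- The 3×3 real matrix with rows `(1, d, d²−1)`, `(d, −(d²−1), 1)`, `(d²−1, 1, −d)`. -/
noncomputable def S₃ : Matrix (Fin 3) (Fin 3) ℝ :=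
  !![1, d, d ^ 2 - 1;
     d, -(d ^ 2 - 1), 1;
     d ^ 2 - 1, 1, -d]

/-- The 6×6 real matrix `S = [[1,1],[1,−1]] ⊗ S₃` (Kronecker product). -/
noncomputable def S : Matrix (Fin 2 × Fin 3) (Fin 2 × Fin 3) ℝ :=
  (!![1, 1; 1, -1] : Matrix (Fin 2) (Fin 2) ℝ) ⊗ₖ S₃

set_option maxHeartbeats 1000000 in
lemma d_cubic : d^3 - d^2 - 2*d + 1 = 0 := by
  unfold d
  set θ := Real.pi / 7 with hθ
  have h4 : Real.cos (4 * θ) = - Real.cos (3 * θ) := by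
    rw [show 4 * θ = Real.pi - 3 * θ by rw [hθ]; ring, Real.cos_pi_sub]
  have h3 : Real.cos (3 * θ) = 4 * Real.cos θ ^ 3 - 3 * Real.cos θ := Real.cos_three_mul θ
  have h2 : Real.cos (2 * θ) = 2 * Real.cos θ ^ 2 - 1 := Real.cos_two_mul θ
  have h4' : Real.cos (4 * θ) = 2 * Real.cos (2*θ) ^ 2 - 1 := by
    rw [show (4:ℝ) * θ = 2 * (2 * θ) by ring]; exact Real.cos_two_mul _
  have hpos : 0 < Real.cos θ := by
    apply Real.cos_pos_of_mem_Ioo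
    constructor <;> nlinarith [Real.pi_pos]
  nlinarith [h4, h3, h2, h4', hpos]

set_option maxHeartbeats 1000000 in
theorem S_symm_orthogonal :
    S.IsSymm ∧
    S * S.transpose
      = (2 * (1 + d ^ 2 + (d ^ 2 - 1) ^ 2)) •
          (1 : Matrix (Fin 2 × Fin 3) (Fin 2 × Fin 3) ℝ) := by
  have hd := d_cubic
  constructor
  · ext ⟨i, j⟩ ⟨k, l⟩
    fin_cases i <;> fin_cases j <;> fin_cases k <;> fin_cases l <;>
      simp [S, S₃, Matrix.transpose_apply, Matrix.kroneckerMap_apply]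
  · ext ⟨i, j⟩ ⟨k, l⟩
    fin_cases i <;> fin_cases j <;> fin_cases k <;> fin_cases l <;>
      simp [S, S₃, Matrix.mul_apply, Matrix.kroneckerMap_apply, Fintype.sum_prod_type,
        Fin.sum_univ_succ, Matrix.one_apply, Prod.mk.injEq, Prod.ext_iff, Fin.ext_iff] <;>
      nlinarith [hd]
end

section
/- For the 6×6 real matrix S = [[1,1],[1,−1]] ⊗ S₃ with D² = 2(1 + d² + (d² − 1)²), the Verlinde numbers N_{ij}^k := (1/D²) · Σ_{a=0}^{5} S_{ia} S_{ja} S_{ka} / S_{0a} are nonnegative integers for all i, j, k ∈ {0,…,5}. -/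
open Kronecker

/-- `D² = 2(1 + d² + (d² − 1)²)`. -/
noncomputable def Dsq : ℝ := 2 * (1 + d ^ 2 + (d ^ 2 - 1) ^ 2)

/-- The Verlinde numbers `N_{ij}^k = (1/D²) Σ_a S_{ia} S_{ja} S_{ka} / S_{0a}`
(the first row of `S` is the row indexed by `(0,0)`). -/
noncomputable def verlinde (i j k : Fin 2 × Fin 3) : ℝ :=
  (1 / Dsq) * ∑ a : Fin 2 × Fin 3,
    S i a * S j a * S k a / S ((0 : Fin 2), (0 : Fin 3)) a

/-- The table of fusion coefficients. -/
def Ntab : Fin 2 → Fin 3 → Fin 2 → Fin 3 → Fin 2 → Fin 3 → ℕ :=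
  ![![![![![![1, 0, 0], ![0, 0, 0]], ![![0, 1, 0], ![0, 0, 0]], ![![0, 0, 1], ![0, 0, 0]]], ![![![0, 0, 0], ![1, 0, 0]], ![![0, 0, 0], ![0, 1, 0]], ![![0, 0, 0], ![0, 0, 1]]]], ![![![![0, 1, 0], ![0, 0, 0]], ![![1, 0, 1], ![0, 0, 0]], ![![0, 1, 1], ![0, 0, 0]]], ![![![0, 0, 0], ![0, 1, 0]], ![![0, 0, 0], ![1, 0, 1]], ![![0, 0, 0], ![0, 1, 1]]]], ![![![![0, 0, 1], ![0, 0, 0]], ![![0, 1, 1], ![0, 0, 0]], ![![1, 1, 1], ![0, 0, 0]]], ![![![0, 0, 0], ![0, 0, 1]], ![![0, 0, 0], ![0, 1, 1]], ![![0, 0, 0], ![1, 1, 1]]]]], ![![![![![0, 0, 0], ![1, 0, 0]], ![![0, 0, 0], ![0, 1, 0]], ![![0, 0, 0], ![0, 0, 1]]], ![![![1, 0, 0], ![0, 0, 0]], ![![0, 1, 0], ![0, 0, 0]], ![![0, 0, 1], ![0, 0, 0]]]], ![![![![0, 0, 0], ![0, 1, 0]], ![![0, 0, 0], ![1, 0,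 1]], ![![0, 0, 0], ![0, 1, 1]]], ![![![0, 1, 0], ![0, 0, 0]], ![![1, 0, 1], ![0, 0, 0]], ![![0, 1, 1], ![0, 0, 0]]]], ![![![![0, 0, 0], ![0, 0, 1]], ![![0, 0, 0], ![0, 1, 1]], ![![0, 0, 0], ![1, 1, 1]]], ![![![0, 0, 1], ![0, 0, 0]], ![![0, 1, 1], ![0, 0, 0]], ![![1, 1, 1], ![0, 0, 0]]]]]]

lemma d_min_poly : d ^ 3 - d ^ 2 - 2 * d + 1 = 0 := by
  have hc4 : Real.cos (4 * (Real.pi / 7)) = - Real.cos (3 * (Real.pi / 7)) := by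
    rw [show (4:ℝ) * (Real.pi / 7) = Real.pi - 3 * (Real.pi / 7) by ring, Real.cos_pi_sub]
  have h3 : Real.cos (3 * (Real.pi / 7)) = 4 * Real.cos (Real.pi / 7) ^ 3 - 3 * Real.cos (Real.pi / 7) :=
    Real.cos_three_mul _
  have h4 : Real.cos (4 * (Real.pi / 7)) = 2 * (2 * Real.cos (Real.pi / 7) ^ 2 - 1) ^ 2 - 1 := by
    rw [show (4:ℝ) * (Real.pi / 7) = 2 * (2 * (Real.pi / 7)) by ring, Real.cos_two_mul,
      Real.cos_two_mul]
  have h : 2 * (2 * Real.cos (Real.pi / 7) ^ 2 - 1) ^ 2 - 1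
      + (4 * Real.cos (Real.pi / 7) ^ 3 - 3 * Real.cos (Real.pi / 7)) = 0 := by
    rw [← h4, ← h3, hc4]; ring
  have hcpos : 0 < Real.cos (Real.pi / 7) := by
    apply Real.cos_pos_of_mem_Ioo
    constructor <;> [linarith [Real.pi_pos]; linarith [Real.pi_pos]]
  have hfac : (2 * Real.cos (Real.pi / 7) + 2) * (d ^ 3 - d ^ 2 - 2 * d + 1) = 0 := by
    unfold d; linear_combination 2 * h
  have hne : (2 * Real.cos (Real.pi / 7) + 2) ≠ 0 := by linarith
  rcases mul_eq_zero.mp hfac with h' | h'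
  · exact absurd h' hne
  · exact h'

lemma d_gt_one : 1 < d := by
  have h := Real.cos_lt_cos_of_nonneg_of_le_pi (x := Real.pi / 7) (y := Real.pi / 3)
    (by positivity) (by linarith [Real.pi_pos]) (by linarith [Real.pi_pos])
  rw [Real.cos_pi_div_three] at h
  unfold d; linarith

set_option maxHeartbeats 40000000 in
theorem verlinde_nonneg_integers :
    ∀ i j k : Fin 2 × Fin 3, ∃ n : ℕ, verlinde i j k = (n : ℝ) := by
  have hm := d_min_poly
  have hdinv : d⁻¹ = 2 + d - d ^ 2 :=
    inv_eq_of_mul_eq_one_right (by linear_combination -hm)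
  have heinv : (d ^ 2 - 1)⁻¹ = -1 - d + d ^ 2 :=
    inv_eq_of_mul_eq_one_right (by linear_combination d * hm)
  have hfinv : (1 - d ^ 2)⁻¹ = 1 + d - d ^ 2 :=
    inv_eq_of_mul_eq_one_right (by linear_combination d * hm)
  have hDinv : Dsq⁻¹ = 2 / 7 - d ^ 2 / 14 := by
    refine inv_eq_of_mul_eq_one_right ?_
    unfold Dsq
    linear_combination ((1:ℝ)/7 + (2/7:ℝ)*d + (-1/7:ℝ)*d^2 + (-1/7:ℝ)*d^3) * hm
  have hd3 : d ^ 3 = -1 + 2 * d + d ^ 2 := by linear_combination hm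
  have hd4 : d ^ 4 = -1 + d + 3 * d ^ 2 := by linear_combination (1 + d) * hm
  have hd5 : d ^ 5 = -3 + 5 * d + 4 * d ^ 2 := by linear_combination (3 + d + d^2) * hm
  have hd6 : d ^ 6 = -4 + 5 * d + 9 * d ^ 2 := by linear_combination (4 + 3*d + d^2 + d^3) * hm
  have hd7 : d ^ 7 = -9 + 14 * d + 14 * d ^ 2 := by
    linear_combination (9 + 4*d + 3*d^2 + d^3 + d^4) * hm
  have hd8 : d ^ 8 = -14 + 19 * d + 28 * d ^ 2 := by
    linear_combination (14 + 9*d + 4*d^2 + 3*d^3 + d^4 + d^5) * hm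
  have hd9 : d ^ 9 = -28 + 42 * d + 47 * d ^ 2 := by
    linear_combination (28 + 14*d + 9*d^2 + 4*d^3 + 3*d^4 + d^5 + d^6) * hm
  have hd10 : d ^ 10 = -47 + 66 * d + 89 * d ^ 2 := by
    linear_combination (47 + 28*d + 14*d^2 + 9*d^3 + 4*d^4 + 3*d^5 + d^6 + d^7) * hm
  intro i j k
  refine ⟨Ntab i.1 i.2 j.1 j.2 k.1 k.2, ?_⟩
  obtain ⟨i1, i2⟩ := i; obtain ⟨j1, j2⟩ := j; obtain ⟨k1, k2⟩ := k
  fin_cases i1 <;> fin_cases i2 <;> fin_cases j1 <;> fin_cases j2 <;>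
    fin_cases k1 <;> fin_cases k2 <;>
  · try norm_num [Ntab, verlinde, S, S₃, Matrix.kroneckerMap_apply, Fintype.sum_prod_type,
      Fin.sum_univ_two, Fin.sum_univ_three, Matrix.cons_val_zero, Matrix.cons_val_one,
      Matrix.head_cons, Matrix.cons_val_two, Matrix.tail_cons, Matrix.head_fin_const,
      div_eq_mul_inv, hdinv, heinv, hfinv, hDinv]
    try ring_nf
    try simp only [hd10, hd9, hd8, hd7, hd6, hd5, hd4, hd3]
    try ring_nf
    try norm_num
end

section
/- Let r₁ = −α − α² + α⁵, r₂ = α + α² − α⁴, r₃ = α⁴ − α⁵ with α = e^{iπ/9}. If a, b, c ∈ ℂ satisfy the three equations r₁a + r₂b + r₃c = 0, r₂a + r₃b + r₁c = 0, and r₃a + r₁b + r₂c = 0, then a = b = c. -/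
/-- `α = e^{iπ/9}`. -/
noncomputable def α : ℂ := Complex.exp (Real.pi * Complex.I / 9)

noncomputable def r₁ : ℂ := -α - α ^ 2 + α ^ 5
noncomputable def r₂ : ℂ := α + α ^ 2 - α ^ 4
noncomputable def r₃ : ℂ := α ^ 4 - α ^ 5

lemma alpha_pow_nine : α ^ 9 = -1 := by
  unfold α
  rw [← Complex.exp_nat_mul]
  norm_num
  rw [show (9 : ℂ) * (Real.pi * Complex.I / 9) = Real.pi * Complex.I by ring]
  exact Complex.exp_pi_mul_I

lemma alpha_cube : α ^ 3 = Complex.exp ((Real.pi / 3 : ℝ) * Complex.I) := by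
  unfold α
  rw [← Complex.exp_nat_mul]
  congr 1
  push_cast
  ring

lemma alpha_cube_ne_neg_one : α ^ 3 ≠ -1 := by
  rw [alpha_cube]
  intro h
  have him := congrArg Complex.im h
  rw [Complex.exp_ofReal_mul_I_im] at him
  simp only [Complex.neg_im, Complex.one_im, neg_zero] at him
  have : Real.sin (Real.pi / 3) > 0 := by
    apply Real.sin_pos_of_pos_of_lt_pi <;> [positivity; linarith [Real.pi_pos]]
  linarith [this, him.le, him.ge]

lemma alpha_rel : α ^ 6 - α ^ 3 + 1 = 0 := by
  have h9 : (α ^ 3 + 1) * (α ^ 6 - α ^ 3 + 1) = 0 := by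
    have := alpha_pow_nine
    linear_combination this
  rcases mul_eq_zero.mp h9 with h | h
  · exact absurd (by linear_combination h) alpha_cube_ne_neg_one
  · exact h

theorem cyclic_system_solution :
    ∀ a b c : ℂ,
      r₁ * a + r₂ * b + r₃ * c = 0 →
      r₂ * a + r₃ * b + r₁ * c = 0 →
      r₃ * a + r₁ * b + r₂ * c = 0 →
      a = b ∧ b = c := by
  intro a b c h1 h2 h3
  simp only [r₁, r₂, r₃] at h1 h2 h3
  have hm := alpha_rel
  constructor
  · linear_combination ((-2*α - 2*α^2 + α^4 + α^5)/9) * h1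
      + ((α + α^2 - 2*α^4 + α^5)/9) * h2
      + ((α + α^2 + α^4 - 2*α^5)/9) * h3
      + ((a - b) * (3 - α^2 + α^3 - α^4)/3) * hm
  · linear_combination ((α + α^2 - 2*α^4 + α^5)/9) * h1
      + ((α + α^2 + α^4 - 2*α^5)/9) * h2
      + ((-2*α - 2*α^2 + α^4 + α^5)/9) * h3
      + ((b - c) * (3 - α^2 + α^3 - α^4)/3) * hm
end
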